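/- Let d ≥ 2 be an integer, let P be a d×d positive definite real matrix, let g ∈ ℝ^d be nonzero, and let α ∈ (−1, 1). With g̃ = g/√(gᵀPg) and P' = (d²(1−α²)/(d²−1))(P − (2(1+dα)/((d+1)(1+α))) P g̃ g̃ᵀ P), the determinant ratio satisfies det P'/det P = (d(1+α)/(d−1))^{d−1} · (d(1−α)/(d+1))^{d+1}; equivalently the volume ratio of the corresponding ellipsoids is Vol(E(x',P'))/Vol(E(x,P)) = (d(1+α)/(d−1))^{(d−1)/2} · (d(1−α)/(d+1))^{(d+1)/2}. -/

import Mathlib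

open Matrix

lemma aux_det (d : ℕ) (β : ℝ) (u : Fin d → ℝ) (P : Matrix (Fin d) (Fin d) ℝ) :
    ((1 : Matrix (Fin d) (Fin d) ℝ) - β • (vecMulVec u u * P)).det
      = 1 - β * (u ⬝ᵥ P *ᵥ u) := by
  have h : β • (vecMulVec u u * P) = replicateCol Unit (β • u) * replicateRow Unit (u ᵥ* P) := by
    rw [vecMulVec_eq Unit]
    ext i j
    simp only [Matrix.smul_apply, Matrix.mul_apply, Matrix.replicateCol_apply, Matrix.replicateRow_apply,
      Pi.smul_apply, smul_eq_mul, vecMul, dotProduct, Finset.mul_sum, Finset.sum_mul]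
    rw [Finset.sum_comm]
    exact Finset.sum_congr rfl fun k _ => Finset.sum_congr rfl fun l _ => by ring
  have hneg : -(replicateCol Unit (β • u)) = replicateCol Unit (-(β • u)) := by
    ext i j; simp
  rw [h, sub_eq_add_neg, ← Matrix.neg_mul, hneg, det_one_add_replicateCol_mul_replicateRow,
    dotProduct_neg, dotProduct_smul, smul_eq_mul, ← Matrix.dotProduct_mulVec]
  ring

theorem stmt0 (d : ℕ) (hd : 2 ≤ d)
    (P : Matrix (Fin d) (Fin d) ℝ) (hP : P.PosDef)
    (g : Fin d → ℝ) (hg : g ≠ 0)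
    (α : ℝ) (hα₁ : -1 < α) (hα₂ : α < 1)
    (gt : Fin d → ℝ) (hgt : gt = (Real.sqrt (g ⬝ᵥ (P *ᵥ g)))⁻¹ • g)
    (P' : Matrix (Fin d) (Fin d) ℝ)
    (hP' : P' = ((d : ℝ)^2 * (1 - α^2) / ((d : ℝ)^2 - 1)) •
      (P - (2 * (1 + (d : ℝ) * α) / (((d : ℝ) + 1) * (1 + α))) •
        (P * vecMulVec gt gt * P))) :
    P'.det / P.det
      = ((d : ℝ) * (1 + α) / ((d : ℝ) - 1)) ^ (d - 1)
        * ((d : ℝ) * (1 - α) / ((d : ℝ) + 1)) ^ (d + 1) ∧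
    Real.sqrt P'.det / Real.sqrt P.det
      = ((d : ℝ) * (1 + α) / ((d : ℝ) - 1)) ^ (((d : ℝ) - 1) / 2)
        * ((d : ℝ) * (1 - α) / ((d : ℝ) + 1)) ^ (((d : ℝ) + 1) / 2) := by
  have hdR : (2 : ℝ) ≤ (d : ℝ) := by exact_mod_cast hd
  have hdm1 : (0 : ℝ) < (d : ℝ) - 1 := by linarith
  have hdp1 : (0 : ℝ) < (d : ℝ) + 1 := by linarith
  have h1a : (0 : ℝ) < 1 + α := by linarith
  have h1a' : (0 : ℝ) < 1 - α := by linarith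
  have hd0 : (0 : ℝ) < (d : ℝ) := by linarith
  set A : ℝ := (d : ℝ) * (1 + α) / ((d : ℝ) - 1) with hA
  set B : ℝ := (d : ℝ) * (1 - α) / ((d : ℝ) + 1) with hB
  have hApos : 0 < A := by positivity
  have hBpos : 0 < B := by positivity
  set c : ℝ := (d : ℝ)^2 * (1 - α^2) / ((d : ℝ)^2 - 1) with hc
  set β : ℝ := 2 * (1 + (d : ℝ) * α) / (((d : ℝ) + 1) * (1 + α)) with hβ
  have ht : 0 < g ⬝ᵥ (P *ᵥ g) := by
    have := hP.dotProduct_mulVec_pos hg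
    simpa using this
  have hk : gt ⬝ᵥ P *ᵥ gt = 1 := by
    have hs : Real.sqrt (g ⬝ᵥ (P *ᵥ g)) ≠ 0 := ne_of_gt (Real.sqrt_pos.2 ht)
    rw [hgt, smul_dotProduct, mulVec_smul, dotProduct_smul, smul_eq_mul, smul_eq_mul,
      ← mul_assoc, ← mul_inv, Real.mul_self_sqrt ht.le, inv_mul_cancel₀ ht.ne']
  -- key determinant identity
  have hsplit : P - β • (P * vecMulVec gt gt * P)
      = P * ((1 : Matrix (Fin d) (Fin d) ℝ) - β • (vecMulVec gt gt * P)) := by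
    rw [Matrix.mul_sub, Matrix.mul_one, Matrix.mul_smul, Matrix.mul_assoc]
  have hdet : P'.det = c ^ d * (P.det * (1 - β)) := by
    rw [hP', det_smul, hsplit, det_mul, aux_det, hk, mul_one]
    simp [Fintype.card_fin]
  have hdetP : 0 < P.det := hP.det_pos
  -- algebra
  have h2 : ((d : ℝ)^2 - 1) ≠ 0 := by nlinarith
  have hcAB : c = A * B := by
    rw [hA, hB, hc]
    field_simp [h2, hdm1.ne', hdp1.ne']
    ring
  have hβAB : 1 - β = B / A := by
    rw [hA, hB, hβ]
    field_simp
    ring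
  obtain ⟨e, rfl⟩ : ∃ e, d = e + 1 := ⟨d - 1, (Nat.succ_pred_eq_of_pos (by omega)).symm⟩
  have hratio : c ^ (e + 1) * (1 - β) = A ^ e * B ^ (e + 2) := by
    rw [hcAB, hβAB, mul_pow]
    field_simp
    ring
  have hR : P'.det / P.det = A ^ e * B ^ (e + 2) := by
    rw [hdet, ← hratio]
    field_simp
  have hcast1 : ((e + 1 : ℕ) : ℝ) - 1 = (e : ℝ) := by push_cast; ring
  have hcast2 : ((e + 1 : ℕ) : ℝ) + 1 = ((e : ℝ) + 2) := by push_cast; ring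
  refine ⟨by simpa using hR, ?_⟩
  have hdet' : P'.det = (A ^ e * B ^ (e + 2)) * P.det := by
    field_simp at hR ⊢
    linarith [hR]
  have hsp : ∀ (x : ℝ), 0 ≤ x → ∀ n : ℕ, Real.sqrt (x ^ n) = x ^ ((n : ℝ) / 2) := by
    intro x hx n
    rw [Real.sqrt_eq_rpow, ← Real.rpow_natCast x n, ← Real.rpow_mul hx, mul_one_div]
  rw [hdet', Real.sqrt_mul (by positivity), Real.sqrt_mul (by positivity),
    mul_div_assoc, div_self (ne_of_gt (Real.sqrt_pos.2 hdetP)), mul_one,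
    hcast1, hcast2, hsp A hApos.le, hsp B hBpos.le]
  push_cast
  ring_nf
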